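/- For every q ∈ ℚ∞ and every x in the quaternion group H, the vector v_q^x satisfies deg(v_q^x) = ⟨h₀, v_q^x⟩ = a(q) and rk(v_q^x) = ⟨v_q^x, h_∞⟩ = b(q); consequently ⟨v_q^x, h_q⟩ = 0 and ⟨h_q, v_q^x⟩ = 0. -/

import Mathlib

open Matrix

abbrev V6 := Fin 6 → ℤ

def C6 : Matrix (Fin 6) (Fin 6) ℤ :=
  !![1,0,-1,-1,1,1;
     0,1,-1,-1,1,1;
     0,0,1,0,-1,-1;
     0,0,0,1,-1,-1;
     0,0,0,0,1,0;
     0,0,0,0,0,1]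

/-- The bilinear form `⟨x,y⟩ = xᵀ C y` on `ℤ^6`. -/
def form (x y : V6) : ℤ := x ⬝ᵥ C6.mulVec y

/-- The quaternion `i`. -/
def qI : Quaternion ℤ := ⟨0,1,0,0⟩
/-- The quaternion `j`. -/
def qJ : Quaternion ℤ := ⟨0,0,1,0⟩
/-- The quaternion `k`. -/
def qK : Quaternion ℤ := ⟨0,0,0,1⟩

instance : DecidableEq (Quaternion ℤ) := fun x y =>
  decidable_of_iff (x.re = y.re ∧ x.imI = y.imI ∧ x.imJ = y.imJ ∧ x.imK = y.imK)
    ⟨fun ⟨h1, h2, h3, h4⟩ => QuaternionAlgebra.ext h1 h2 h3 h4,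
     fun h => by subst h; exact ⟨rfl, rfl, rfl, rfl⟩⟩

/-- The quaternion group `H = {±1, ±i, ±j, ±k}`. -/
def Hset : Finset (Quaternion ℤ) := {1, -1, qI, -qI, qJ, -qJ, qK, -qK}

/-- The subset `H⁺ = {1, i, j, k}`. -/
def Hplus : Finset (Quaternion ℤ) := {1, qI, qJ, qK}

/-- Index type for the three special slopes `0`, `1`, `∞`. -/
inductive Ty | zero | one | inf
deriving DecidableEq

def h0 : V6 := ![0,0,1,1,1,1]
def h1 : V6 := ![1,1,2,2,1,1]
def hinf : V6 := ![1,1,1,1,0,0]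

def hTy : Ty → V6
  | .zero => h0
  | .one => h1
  | .inf => hinf

/-- The vectors `v_t^x` for `t ∈ {0,1,∞}` and `x ∈ H⁺`. -/
def vposTy : Ty → Quaternion ℤ → V6
  | .zero, x => if x = 1 then ![0,0,1,0,1,0] else if x = qI then ![-1,0,0,0,0,0]
      else if x = qJ then ![0,0,1,0,0,1] else ![0,1,1,1,1,1]
  | .one, x => if x = 1 then ![1,0,1,1,1,0] else if x = qI then ![0,1,1,1,1,0]
      else if x = qJ then ![0,0,1,0,0,0] else ![1,1,2,1,1,1]
  | .inf, x => if x = 1 then ![1,0,0,1,0,0] else if x = qI then ![1,1,1,1,1,0]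
      else if x = qJ then ![0,0,0,0,0,-1] else ![1,0,1,0,0,0]

/-- The vectors `v_t^x` for `t ∈ {0,1,∞}` and `x ∈ H`, with `v_t^{-x} = h_t - v_t^x`. -/
def vTy (t : Ty) (x : Quaternion ℤ) : V6 :=
  if x ∈ Hplus then vposTy t x else hTy t - vposTy t (-x)

/-- `a(q)`: numerator, with `a(∞) = 1`. -/
def aQ : WithTop ℚ → ℤ := WithTop.recTopCoe 1 Rat.num

/-- `b(q)`: denominator, with `b(∞) = 0`. -/
def bQ : WithTop ℚ → ℤ := WithTop.recTopCoe 0 (fun x => (x.den : ℤ))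

/-- The type `t(q) ∈ {0,1,∞}` of a slope `q`. -/
def tyQ (q : WithTop ℚ) : Ty :=
  if aQ q % 2 = 0 then Ty.zero else if bQ q % 2 = 1 then Ty.one else Ty.inf

/-- `⌊n⌋₂ = n/2` for even `n` and `(n-1)/2` for odd `n`. -/
def half2 (n : ℤ) : ℤ := if Even n then n / 2 else (n - 1) / 2

/-- `h_q = b(q)·h₀ + a(q)·h_∞`. -/
def hQ (q : WithTop ℚ) : V6 := bQ q • h0 + aQ q • hinf

/-- `v_q^x = v_{t(q)}^x + ⌊b(q)⌋₂·h₀ + ⌊a(q)⌋₂·h_∞`. -/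
def vQ (q : WithTop ℚ) (x : Quaternion ℤ) : V6 :=
  vTy (tyQ q) x + half2 (bQ q) • h0 + half2 (aQ q) • hinf

/-- `rk e = ⟨e, h_∞⟩`. -/
def rk (e : V6) : ℤ := form e hinf

/-- `deg e = ⟨h₀, e⟩`. -/
def degV (e : V6) : ℤ := form h0 e

/-- `e` is positive if `rk e > 0`, or `rk e = 0` and `deg e > 0`. -/
def PosV (e : V6) : Prop := 0 < rk e ∨ (rk e = 0 ∧ 0 < degV e)

/-- `d(p,q) = |a(q)b(p) - a(p)b(q)|`. -/
def dQ (p q : WithTop ℚ) : ℤ := |aQ q * bQ p - aQ p * bQ q|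

/-- Complexity `c(p) = |a(p)| + |b(p)| + |a(p)+b(p)|`. -/
def cpx (p : WithTop ℚ) : ℤ := |aQ p| + |bQ p| + |aQ p + bQ p|


/-- value of `deg` on the base vectors of each type -/
def dval : Ty → ℤ
  | .zero => 0 | .one => 1 | .inf => 1

/-- value of `rk` on the base vectors of each type -/
def rval : Ty → ℤ
  | .zero => 1 | .one => 1 | .inf => 0

lemma form_add_left (u v w : V6) : form (u + v) w = form u w + form v w := by
  simp [form, add_dotProduct]

lemma form_add_right (u v w : V6) : form u (v + w) = form u v + form u w := by
  simp [form, mulVec_add, dotProduct_add]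

lemma form_smul_left (a : ℤ) (u w : V6) : form (a • u) w = a * form u w := by
  rw [form, form, smul_dotProduct, smul_eq_mul]

lemma form_smul_right (a : ℤ) (u w : V6) : form u (a • w) = a * form u w := by
  rw [form, form, mulVec_smul, dotProduct_smul, smul_eq_mul]

lemma form_consts : form h0 h0 = 0 ∧ form h0 hinf = 2 ∧ form hinf h0 = -2 ∧
    form hinf hinf = 0 := by decide

lemma base_vals (t : Ty) (x : Quaternion ℤ) (hx : x ∈ Hset) :
    form h0 (vTy t x) = dval t ∧ form (vTy t x) hinf = rval t ∧
    form (vTy t x) h0 = -(dval t) ∧ form hinf (vTy t x) = -(rval t) := by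
  fin_cases hx <;> cases t <;> decide

lemma half2_eq (n : ℤ) : 2 * half2 n + n % 2 = n := by
  rcases Int.even_or_odd n with h | h
  · rw [half2, if_pos h]; rw [Int.even_iff] at h; omega
  · rw [half2, if_neg (Int.not_even_iff_odd.mpr h)]; rw [Int.odd_iff] at h; omega

lemma parity_ab (q : WithTop ℚ) : ¬(aQ q % 2 = 0 ∧ bQ q % 2 = 0) := by
  induction q using WithTop.recTopCoe with
  | top => simp [aQ, bQ]
  | coe r =>
    rintro ⟨h1, h2⟩
    have hc : Nat.gcd r.num.natAbs r.den = 1 := r.reduced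
    have d1 : (2 : ℤ) ∣ r.num := by
      have : aQ (r : ℚ) = r.num := rfl
      omega
    have d2 : (2 : ℕ) ∣ r.den := by
      have : bQ (r : ℚ) = (r.den : ℤ) := rfl
      omega
    have d1' : (2 : ℕ) ∣ r.num.natAbs := Int.natAbs_dvd_natAbs.mpr d1
    have := Nat.dvd_gcd d1' d2
    omega

lemma ty_parity (q : WithTop ℚ) :
    aQ q % 2 = dval (tyQ q) % 2 ∧ bQ q % 2 = rval (tyQ q) ∧
    dval (tyQ q) = aQ q % 2 := by
  have hp := parity_ab q
  have ha : aQ q % 2 = 0 ∨ aQ q % 2 = 1 := by omega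
  have hb : bQ q % 2 = 0 ∨ bQ q % 2 = 1 := by omega
  unfold tyQ
  split_ifs with h1 h2 <;> simp only [dval, rval] <;> omega

theorem stmt3 (q : WithTop ℚ) (x : Quaternion ℤ) (hx : x ∈ Hset) :
    degV (vQ q x) = aQ q ∧ rk (vQ q x) = bQ q ∧
    form (vQ q x) (hQ q) = 0 ∧ form (hQ q) (vQ q x) = 0 := by
  obtain ⟨c1, c2, c3, c4⟩ := form_consts
  obtain ⟨b1, b2, b3, b4⟩ := base_vals (tyQ q) x hx
  obtain ⟨p1, p2, p3⟩ := ty_parity q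
  have ha := half2_eq (aQ q)
  have hb := half2_eq (bQ q)
  set a := aQ q
  set b := bQ q
  set α := half2 a
  set β := half2 b
  set vT := vTy (tyQ q) x
  have hdval : dval (tyQ q) = a % 2 := p3
  have hrval : rval (tyQ q) = b % 2 := p2.symm
  have e1 : degV (vQ q x) = dval (tyQ q) + β * 0 + α * 2 := by
    simp only [degV, vQ, form_add_right, form_smul_right, b1, c1, c2]
    change form h0 vT + β * 0 + α * 2 = _; rw [b1]
  have e2 : rk (vQ q x) = rval (tyQ q) + β * 2 + α * 0 := by
    simp only [rk, vQ, form_add_left, form_smul_left, b2, c2, c4]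
    change form vT hinf + β * 2 + α * 0 = _; rw [b2]
  have e3 : form (vQ q x) (hQ q) =
      b * (-(dval (tyQ q)) + β * 0 + α * (-2)) + a * (rval (tyQ q) + β * 2 + α * 0) := by
    simp only [vQ, hQ, form_add_left, form_add_right, form_smul_left, form_smul_right,
      b2, b3, c1, c2, c3, c4]
    try ring
    change b * form vT h0 - b * α * 2 + β * a * 2 + a * form vT hinf = _; rw [b3, b2]; ring
  have e4 : form (hQ q) (vQ q x) =
      b * (dval (tyQ q) + β * 0 + α * 2) + a * (-(rval (tyQ q)) + β * (-2) + α * 0) := by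
    simp only [vQ, hQ, form_add_left, form_add_right, form_smul_left, form_smul_right,
      b1, b4, c1, c2, c3, c4]
    try ring
    change b * form h0 vT + b * α * 2 + a * form hinf vT - a * β * 2 = _; rw [b1, b4]; ring
  refine ⟨?_, ?_, ?_, ?_⟩
  · rw [e1, hdval]; omega
  · rw [e2, hrval]; omega
  · rw [e3, hdval, hrval]; linear_combination (-b) * ha + a * hb
  · rw [e4, hdval, hrval]; linear_combination b * ha + (-a) * hb
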